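/- Under the same construction as the k-HST spanner (bicliques Z_x × Z_{x_j} for each internal node x and each child x_j), for any two safe leaves u, v ∉ B with x = lca(u,v), the graph H \ B contains a u–v path of length at most (2 + 2/(k−1))·d_T(u,v). -/

import Mathlib

open scoped Classical

/-- A finite rooted tree, given by parent pointers: every non-root node has a
parent, and every node reaches the root by following parents. -/
structure RTree (V : Type*) where
  root : V
  parent : V → Option V
  parent_root : parent root = none
  parent_ne_root : ∀ v, v ≠ root → (parent v).isSome
  reaches_root : ∀ v, Relation.ReflTransGen (fun a b => parent a = some b) v root

/-- The children of a node. -/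
noncomputable def RTree.children {V : Type*} [Fintype V] (T : RTree V) (v : V) : Finset V :=
  Finset.univ.filter (fun u => T.parent u = some v)

/-- `T.ancestor x u` : `x` is a (weak) ancestor of `u`. -/
def RTree.ancestor {V : Type*} (T : RTree V) (x u : V) : Prop :=
  Relation.ReflTransGen (fun a b => T.parent a = some b) u x

/-- The leaves in the subtree rooted at `x`. -/
noncomputable def RTree.leavesBelow {V : Type*} [Fintype V] (T : RTree V) (x : V) : Finset V :=
  Finset.univ.filter (fun u => T.children u = ∅ ∧ T.ancestor x u)

/-- Length of a path (list of points) with respect to distance `d`. -/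
noncomputable def pathLen {X : Type*} (d : X → X → ℝ) : List X → ℝ
  | [] => 0
  | [_] => 0
  | a :: b :: l => d a b + pathLen d (b :: l)



section AuxLemmas

lemma pathLen_cons_cons {X : Type*} (d : X → X → ℝ) (a b : X) (l : List X) :
    pathLen d (a :: b :: l) = d a b + pathLen d (b :: l) := rfl

lemma pathLen_append {X : Type*} (d : X → X → ℝ) :
    ∀ (l1 : List X) (a : X) (l2 : List X), l1.getLast? = some a →
      pathLen d (l1 ++ l2) = pathLen d l1 + pathLen d (a :: l2)
  | [], a, l2, h => by simp at h
  | [b], a, l2, h => by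
      simp only [List.getLast?_singleton, Option.some.injEq] at h
      subst h
      cases l2 <;> simp [pathLen]
  | b :: c :: t, a, l2, h => by
      have h' : (c :: t).getLast? = some a := by
        simpa [List.getLast?_cons_cons] using h
      have ih := pathLen_append d (c :: t) a l2 h'
      show d b c + pathLen d ((c :: t) ++ l2)
        = (d b c + pathLen d (c :: t)) + pathLen d (a :: l2)
      rw [ih]; ring

variable {V : Type*}

lemma Gamma_nonneg (T : RTree V) {k : ℝ} (hk : 1 < k) (Γ : V → ℝ)
    (hHST : ∀ u v, T.parent u = some v → k * Γ u ≤ Γ v)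
    {w x : V} (h : T.ancestor x w) (hw : 0 ≤ Γ w) : 0 ≤ Γ x := by
  induction h with
  | refl => exact hw
  | tail _ hstep ih => nlinarith [hHST _ _ hstep]

lemma Gamma_mono (T : RTree V) {k : ℝ} (hk : 1 < k) (Γ : V → ℝ)
    (hHST : ∀ u v, T.parent u = some v → k * Γ u ≤ Γ v)
    {w x : V} (h : T.ancestor x w) (hw : 0 ≤ Γ w) : Γ w ≤ Γ x := by
  induction h with
  | refl => exact le_refl _
  | @tail b x hwb hstep ih =>
      have hb : 0 ≤ Γ b := Gamma_nonneg T hk Γ hHST hwb hw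
      nlinarith [hHST _ _ hstep]

lemma lca_le (T : RTree V) {k : ℝ} (hk : 1 < k) (Γ : V → ℝ) (lca : V → V → V)
    (hHST : ∀ u v, T.parent u = some v → k * Γ u ≤ Γ v)
    (hlca1 : ∀ u v, T.ancestor (lca u v) u)
    (hlca3 : ∀ u v w, T.ancestor w u → T.ancestor w v → T.ancestor w (lca u v))
    {x a b : V} (ha : T.ancestor x a) (hb : T.ancestor x b) (ha0 : Γ a = 0) :
    0 ≤ Γ (lca a b) ∧ Γ (lca a b) ≤ Γ x := by
  have h1 : 0 ≤ Γ (lca a b) := Gamma_nonneg T hk Γ hHST (hlca1 a b) ha0.ge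
  exact ⟨h1, Gamma_mono T hk Γ hHST (hlca3 a b x ha hb) h1⟩

lemma leavesBelow_self [Fintype V] (T : RTree V) {u z : V} (hu : T.children u = ∅)
    (hz : z ∈ T.leavesBelow u) : z = u := by
  have h := (Finset.mem_filter.mp hz).2.2
  rcases Relation.ReflTransGen.cases_tail h with h1 | ⟨c, _, hc⟩
  · exact h1.symm
  · exfalso
    have : c ∈ T.children u := Finset.mem_filter.mpr ⟨Finset.mem_univ _, hc⟩
    simp [hu] at this

lemma up_path [Fintype V] (T : RTree V) {k : ℝ} (hk : 1 < k)
    (Γ : V → ℝ) (lca : V → V → V)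
    (hleaf0 : ∀ v, Γ v = 0 ↔ T.children v = ∅)
    (hHST : ∀ u v, T.parent u = some v → k * Γ u ≤ Γ v)
    (hlca1 : ∀ u v, T.ancestor (lca u v) u)
    (hlca3 : ∀ u v w, T.ancestor w u → T.ancestor w v → T.ancestor w (lca u v))
    (Z : V → Finset V) (hZ : ∀ x, Z x ⊆ T.leavesBelow x)
    (H : SimpleGraph V)
    (hH : ∀ a b, H.Adj a b ↔ a ≠ b ∧ ∃ x y, T.parent y = some x ∧
      ((a ∈ Z x ∧ b ∈ Z y) ∨ (a ∈ Z y ∧ b ∈ Z x)))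
    (B : Finset V)
    (w : V) (hw_leaf : T.children w = ∅) (hwB : w ∉ B)
    (hwsafe : ∀ x, T.ancestor x w → (Z x \ B).Nonempty)
    {x : V} (hx : T.ancestor x w) :
    ∀ z ∈ Z x, z ∉ B → ∃ l : List V, l ≠ [] ∧ l.Chain' H.Adj ∧ (∀ a ∈ l, a ∉ B) ∧
      l.head? = some w ∧ l.getLast? = some z ∧
      pathLen (fun a b => Γ (lca a b)) l ≤ (k / (k - 1)) * Γ x := by
  have hk1 : (0:ℝ) < k - 1 := by linarith
  have hcpos : (0:ℝ) < k / (k - 1) := by positivity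
  induction hx with
  | refl =>
      intro z hz hzB
      have hzw : z = w := leavesBelow_self T hw_leaf (hZ w hz)
      subst hzw
      refine ⟨[z], by simp, List.isChain_singleton _, by simpa using hzB, rfl, rfl, ?_⟩
      have : Γ z = 0 := (hleaf0 z).mpr hw_leaf
      simp [pathLen, this]
  | @tail b x hwb hbx ih =>
      intro z hz hzB
      obtain ⟨z', hz'⟩ := hwsafe b hwb
      rw [Finset.mem_sdiff] at hz'
      obtain ⟨l', hne, hch, hB, hhd, hlast, hlen⟩ := ih z' hz'.1 hz'.2
      have hz'lb := hZ b hz'.1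
      have hz'leaf : T.children z' = ∅ := (Finset.mem_filter.mp hz'lb).2.1
      have hz'anc : T.ancestor b z' := (Finset.mem_filter.mp hz'lb).2.2
      have hzlb := hZ x hz
      have hzleaf : T.children z = ∅ := (Finset.mem_filter.mp hzlb).2.1
      have hzanc : T.ancestor x z := (Finset.mem_filter.mp hzlb).2.2
      have hxz' : T.ancestor x z' := hz'anc.tail hbx
      have hΓb0 : 0 ≤ Γ b :=
        Gamma_nonneg T hk Γ hHST hz'anc ((hleaf0 z').mpr hz'leaf).ge
      have hkb : k * Γ b ≤ Γ x := hHST b x hbx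
      have hΓx0 : 0 ≤ Γ x := by nlinarith
      have hbxle : Γ b ≤ Γ x := by nlinarith
      by_cases hzz : z = z'
      · subst hzz
        refine ⟨l', hne, hch, hB, hhd, hlast, ?_⟩
        calc pathLen (fun a b => Γ (lca a b)) l' ≤ k / (k - 1) * Γ b := hlen
          _ ≤ k / (k - 1) * Γ x := by nlinarith
      · have hd := lca_le T hk Γ lca hHST hlca1 hlca3 hxz' hzanc
          ((hleaf0 z').mpr hz'leaf)
        have hadj : H.Adj z' z := (hH z' z).mpr
          ⟨fun h => hzz h.symm, x, b, hbx, Or.inr ⟨hz'.1, hz⟩⟩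
        refine ⟨l' ++ [z], by simp, ?_, ?_, ?_, ?_, ?_⟩
        · refine List.isChain_append.mpr ⟨hch, by simp, ?_⟩
          intro p hp q hq
          simp only [Option.mem_def, List.head?_cons, Option.some.injEq] at hp hq
          rw [hlast, Option.some.injEq] at hp
          subst hp; subst hq
          exact hadj
        · intro a ha
          rcases List.mem_append.mp ha with h | h
          · exact hB a h
          · simp only [List.mem_singleton] at h; subst h; exact hzB
        · rw [List.head?_append, hhd]; rfl
        · exact List.getLast?_concat
        · rw [pathLen_append _ l' z' [z] hlast]
          have h4 : k / (k - 1) * Γ b ≤ Γ x / (k - 1) := by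
            rw [le_div_iff₀ hk1,
              show k / (k - 1) * Γ b * (k - 1) = (k / (k - 1) * (k - 1)) * Γ b by ring,
              div_mul_cancel₀ _ (ne_of_gt hk1)]
            exact hkb
          have h5 : k / (k - 1) * Γ x = Γ x + Γ x / (k - 1) := by
            field_simp; ring
          rw [pathLen_cons_cons]
          have h6 : pathLen (fun a b => Γ (lca a b)) [z] = 0 := rfl
          rw [h6, h5]
          have := hd.2
          linarith

lemma down_path [Fintype V] (T : RTree V) {k : ℝ} (hk : 1 < k)
    (Γ : V → ℝ) (lca : V → V → V)
    (hleaf0 : ∀ v, Γ v = 0 ↔ T.children v = ∅)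
    (hHST : ∀ u v, T.parent u = some v → k * Γ u ≤ Γ v)
    (hlca1 : ∀ u v, T.ancestor (lca u v) u)
    (hlca3 : ∀ u v w, T.ancestor w u → T.ancestor w v → T.ancestor w (lca u v))
    (Z : V → Finset V) (hZ : ∀ x, Z x ⊆ T.leavesBelow x)
    (H : SimpleGraph V)
    (hH : ∀ a b, H.Adj a b ↔ a ≠ b ∧ ∃ x y, T.parent y = some x ∧
      ((a ∈ Z x ∧ b ∈ Z y) ∨ (a ∈ Z y ∧ b ∈ Z x)))
    (B : Finset V)
    (w : V) (hw_leaf : T.children w = ∅) (hwB : w ∉ B)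
    (hwsafe : ∀ x, T.ancestor x w → (Z x \ B).Nonempty)
    {x : V} (hx : T.ancestor x w) :
    ∀ z ∈ Z x, z ∉ B → ∃ l : List V, l ≠ [] ∧ l.Chain' H.Adj ∧ (∀ a ∈ l, a ∉ B) ∧
      l.head? = some z ∧ l.getLast? = some w ∧
      pathLen (fun a b => Γ (lca a b)) l ≤ (k / (k - 1)) * Γ x := by
  have hk1 : (0:ℝ) < k - 1 := by linarith
  have hcpos : (0:ℝ) < k / (k - 1) := by positivity
  induction hx with
  | refl =>
      intro z hz hzB
      have hzw : z = w := leavesBelow_self T hw_leaf (hZ w hz)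
      subst hzw
      refine ⟨[z], by simp, List.isChain_singleton _, by simpa using hzB, rfl, rfl, ?_⟩
      have : Γ z = 0 := (hleaf0 z).mpr hw_leaf
      simp [pathLen, this]
  | @tail b x hwb hbx ih =>
      intro z hz hzB
      obtain ⟨z', hz'⟩ := hwsafe b hwb
      rw [Finset.mem_sdiff] at hz'
      obtain ⟨l', hne, hch, hB, hhd, hlast, hlen⟩ := ih z' hz'.1 hz'.2
      have hz'lb := hZ b hz'.1
      have hz'leaf : T.children z' = ∅ := (Finset.mem_filter.mp hz'lb).2.1
      have hz'anc : T.ancestor b z' := (Finset.mem_filter.mp hz'lb).2.2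
      have hzlb := hZ x hz
      have hzleaf : T.children z = ∅ := (Finset.mem_filter.mp hzlb).2.1
      have hzanc : T.ancestor x z := (Finset.mem_filter.mp hzlb).2.2
      have hxz' : T.ancestor x z' := hz'anc.tail hbx
      have hΓb0 : 0 ≤ Γ b :=
        Gamma_nonneg T hk Γ hHST hz'anc ((hleaf0 z').mpr hz'leaf).ge
      have hkb : k * Γ b ≤ Γ x := hHST b x hbx
      have hΓx0 : 0 ≤ Γ x := by nlinarith
      have hbxle : Γ b ≤ Γ x := by nlinarith
      by_cases hzz : z = z'
      · subst hzz
        refine ⟨l', hne, hch, hB, hhd, hlast, ?_⟩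
        calc pathLen (fun a b => Γ (lca a b)) l' ≤ k / (k - 1) * Γ b := hlen
          _ ≤ k / (k - 1) * Γ x := by nlinarith
      · have hd := lca_le T hk Γ lca hHST hlca1 hlca3 hzanc hxz'
          ((hleaf0 z).mpr hzleaf)
        have hadj : H.Adj z z' := (hH z z').mpr
          ⟨hzz, x, b, hbx, Or.inl ⟨hz, hz'.1⟩⟩
        obtain ⟨rest, rfl⟩ : ∃ rest, l' = z' :: rest := by
          cases l' with
          | nil => simp at hhd
          | cons a t =>
              have : a = z' := by simpa using hhd
              exact ⟨t, by rw [this]⟩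
        refine ⟨z :: z' :: rest, by simp, ?_, ?_, rfl, ?_, ?_⟩
        · refine List.isChain_cons.mpr ⟨?_, hch⟩
          intro q hq
          simp only [List.head?_cons, Option.mem_def, Option.some.injEq] at hq
          subst hq
          exact hadj
        · intro a ha
          rcases List.mem_cons.mp ha with h | h
          · subst h; exact hzB
          · exact hB a h
        · rw [List.getLast?_cons_cons]; exact hlast
        · rw [pathLen_cons_cons]
          have h4 : k / (k - 1) * Γ b ≤ Γ x / (k - 1) := by
            rw [le_div_iff₀ hk1,
              show k / (k - 1) * Γ b * (k - 1) = (k / (k - 1) * (k - 1)) * Γ b by ring,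
              div_mul_cancel₀ _ (ne_of_gt hk1)]
            exact hkb
          have h5 : k / (k - 1) * Γ x = Γ x + Γ x / (k - 1) := by
            field_simp; ring
          rw [h5]
          have := hd.2
          linarith

end AuxLemmas

/-- In the biclique spanner of a `k`-HST, any two safe leaves `u, v ∉ B` are
connected in `H \ B` by a path of length at most
`(2 + 2/(k−1))·d_T(u,v) = (2 + 2/(k−1))·Γ (lca u v)`. -/
theorem stmt_15 {V : Type*} [Fintype V] (T : RTree V) (k : ℝ) (hk : 1 < k)
    (Γ : V → ℝ) (lca : V → V → V)
    (hleaf0 : ∀ v, Γ v = 0 ↔ T.children v = ∅)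
    (hHST : ∀ u v, T.parent u = some v → k * Γ u ≤ Γ v)
    (hlca1 : ∀ u v, T.ancestor (lca u v) u)
    (hlca2 : ∀ u v, T.ancestor (lca u v) v)
    (hlca3 : ∀ u v w, T.ancestor w u → T.ancestor w v → T.ancestor w (lca u v))
    (Z : V → Finset V) (hZ : ∀ x, Z x ⊆ T.leavesBelow x)
    (H : SimpleGraph V)
    (hH : ∀ a b, H.Adj a b ↔ a ≠ b ∧ ∃ x y, T.parent y = some x ∧
      ((a ∈ Z x ∧ b ∈ Z y) ∨ (a ∈ Z y ∧ b ∈ Z x)))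
    (B : Finset V)
    (u : V) (hu_leaf : T.children u = ∅) (huB : u ∉ B)
    (husafe : ∀ x, T.ancestor x u → (Z x \ B).Nonempty)
    (v : V) (hv_leaf : T.children v = ∅) (hvB : v ∉ B)
    (hvsafe : ∀ x, T.ancestor x v → (Z x \ B).Nonempty) :
    ∃ l : List V, l ≠ [] ∧ l.Chain' H.Adj ∧ (∀ w ∈ l, w ∉ B) ∧
      l.head? = some u ∧ l.getLast? = some v ∧
      pathLen (fun a b => Γ (lca a b)) l ≤ (2 + 2 / (k - 1)) * Γ (lca u v) := by
  obtain ⟨z, hz⟩ := husafe (lca u v) (hlca1 u v)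
  rw [Finset.mem_sdiff] at hz
  obtain ⟨lu, hune, huch, huB', huhd, hulast, hulen⟩ :=
    up_path T hk Γ lca hleaf0 hHST hlca1 hlca3 Z hZ H hH B u hu_leaf huB husafe
      (hlca1 u v) z hz.1 hz.2
  obtain ⟨lv, hvne, hvch, hvB', hvhd, hvlast, hvlen⟩ :=
    down_path T hk Γ lca hleaf0 hHST hlca1 hlca3 Z hZ H hH B v hv_leaf hvB hvsafe
      (hlca2 u v) z hz.1 hz.2
  have hk1 : (0:ℝ) < k - 1 := by linarith
  obtain ⟨rest, rfl⟩ : ∃ rest, lv = z :: rest := by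
    cases lv with
    | nil => simp at hvhd
    | cons a t =>
        have : a = z := by simpa using hvhd
        exact ⟨t, by rw [this]⟩
  obtain ⟨lurest, rfl⟩ : ∃ t, lu = u :: t := by
    cases lu with
    | nil => simp at huhd
    | cons a t =>
        have : a = u := by simpa using huhd
        exact ⟨t, by rw [this]⟩
  refine ⟨(u :: lurest) ++ rest, by simp, ?_, ?_, by simp, ?_, ?_⟩
  · refine List.isChain_append.mpr ⟨huch, (List.isChain_cons.mp hvch).2, ?_⟩
    intro p hp q hq
    simp only [Option.mem_def] at hp hq
    rw [hulast, Option.some.injEq] at hp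
    subst hp
    exact (List.isChain_cons.mp hvch).1 q hq
  · intro a ha
    rcases List.mem_append.mp ha with h | h
    · exact huB' a h
    · exact hvB' a (List.mem_cons_of_mem _ h)
  · cases rest with
    | nil =>
        have hzv : z = v := by simpa using hvlast
        subst hzv
        simpa using hulast
    | cons b t =>
        rw [List.getLast?_append_of_ne_nil _ (List.cons_ne_nil b t)]
        rw [← List.getLast?_cons_cons (a := z)]
        exact hvlast
  · rw [pathLen_append (fun a b => Γ (lca a b)) (u :: lurest) z rest hulast]
    have hΓx0 : 0 ≤ Γ (lca u v) :=
      Gamma_nonneg T hk Γ hHST (hlca1 u v) ((hleaf0 u).mpr hu_leaf).ge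
    have heq : (2 + 2 / (k - 1)) * Γ (lca u v)
        = k / (k - 1) * Γ (lca u v) + k / (k - 1) * Γ (lca u v) := by
      field_simp; ring
    rw [heq]
    exact add_le_add hulen hvlen
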